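/- Let (X,d) be a metric space equipped with its Borel σ-algebra, let r_1,…,r_M ∈ X be prototypes with dissimilarity embedding ζ(g) = (d(g,r_1),…,d(g,r_M)) ∈ ℝ^M, and let d' be a metric on ℝ^M for which there is a constant m' > 0 with d'(a,b) ≤ m'·‖a−b‖₂ for all a,b ∈ ℝ^M. Let g_1,…,g_n (with n ≥ 2) be i.i.d. X-valued random elements on a probability space (Ω,P) with common law Q such that E[d(g_1,z)²] < ∞ for every z ∈ X. Let m ∈ X be a Fréchet population mean of Q with V_Q := E[d(g_1,m)²], and let μ̂ : Ω → X be a measurable Fréchet sample mean of g_1,…,g_n. Set ȳ := (1/n)·Σ_{t=1}^n ζ(g_t), e := E[ζ(g_1)], Var_F := E[‖ζ(g_1) − e‖₂²], and v₂ := M·V_Q − Var_F/2. Then for every δ > 0: P( |d'(e,ȳ) − d'(ζ(m),ζ(μ̂))| ≤ m'·√(2·(v₂ + δ)) ) ≥ 1 − v₂/δ. -/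

import Mathlib

open MeasureTheory ProbabilityTheory

/-- The dissimilarity embedding `ζ(g) = (d(g,r_1),…,d(g,r_M)) ∈ ℝ^M`. -/
noncomputable def dissEmbed {X : Type*} [MetricSpace X] {M : ℕ} (r : Fin M → X) (g : X) :
    EuclideanSpace ℝ (Fin M) :=
  (WithLp.equiv 2 (Fin M → ℝ)).symm fun i => dist g (r i)

lemma dissEmbed_apply {X : Type*} [MetricSpace X] {M : ℕ} (r : Fin M → X) (x : X) (i : Fin M) :
    dissEmbed r x i = dist x (r i) := rfl

lemma euclid_norm_sq {M : ℕ} (x : EuclideanSpace ℝ (Fin M)) : ‖x‖ ^ 2 = ∑ i, x i ^ 2 := by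
  rw [EuclideanSpace.norm_eq, Real.sq_sqrt (Finset.sum_nonneg fun i _ => sq_nonneg _)]
  simp [Real.norm_eq_abs, sq_abs]

lemma dissEmbed_continuous {X : Type*} [MetricSpace X] {M : ℕ} (r : Fin M → X) :
    Continuous (dissEmbed r) := by
  apply Continuous.comp
  · exact PiLp.continuous_toLp (p := 2) (β := fun _ : Fin M => ℝ)
  · exact continuous_pi fun i => continuous_id.dist continuous_const

lemma dissEmbed_sub_norm_sq_le {X : Type*} [MetricSpace X] {M : ℕ} (r : Fin M → X) (a b : X) :
    ‖dissEmbed r a - dissEmbed r b‖ ^ 2 ≤ (M : ℝ) * dist a b ^ 2 := by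
  rw [euclid_norm_sq]
  have h : ∀ i : Fin M, (dissEmbed r a - dissEmbed r b) i ^ 2 ≤ dist a b ^ 2 := by
    intro i
    have : (dissEmbed r a - dissEmbed r b) i = dist a (r i) - dist b (r i) := rfl
    rw [this]
    have h1 : |dist a (r i) - dist b (r i)| ≤ dist a b := abs_dist_sub_le a b (r i)
    calc (dist a (r i) - dist b (r i)) ^ 2 = |dist a (r i) - dist b (r i)| ^ 2 := (sq_abs _).symm
      _ ≤ dist a b ^ 2 := pow_le_pow_left₀ (abs_nonneg _) h1 2
  calc ∑ i, (dissEmbed r a - dissEmbed r b) i ^ 2 ≤ ∑ _i : Fin M, dist a b ^ 2 :=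
        Finset.sum_le_sum fun i _ => h i
    _ = (M : ℝ) * dist a b ^ 2 := by simp [Finset.sum_const, mul_comm]

lemma sample_identity {F : Type*} [NormedAddCommGroup F] [InnerProductSpace ℝ F]
    {n : ℕ} (hn : (n : ℝ) ≠ 0) (v : Fin n → F) (c : F) :
    ∑ t, ‖v t - c‖ ^ 2 =
      ∑ t, ‖v t - (n : ℝ)⁻¹ • ∑ s, v s‖ ^ 2 + (n : ℝ) * ‖(n : ℝ)⁻¹ • ∑ s, v s - c‖ ^ 2 := by
  set w : F := (n : ℝ)⁻¹ • ∑ s, v s with hw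
  have hnw : (n : ℝ) • w = ∑ s, v s := by
    rw [hw, smul_smul, mul_inv_cancel₀ hn, one_smul]
  have key : ∀ t, ‖v t - c‖ ^ 2 =
      ‖v t - w‖ ^ 2 + 2 * inner ℝ (v t - w) (w - c) + ‖w - c‖ ^ 2 := by
    intro t
    have h := norm_add_sq_real (v t - w) (w - c)
    rwa [sub_add_sub_cancel] at h
  have hsum : ∑ t, (inner ℝ (v t - w) (w - c) : ℝ) = 0 := by
    rw [← sum_inner]
    have : ∑ t, (v t - w) = (0 : F) := by
      rw [Finset.sum_sub_distrib, Finset.sum_const, Finset.card_univ, Fintype.card_fin,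
        ← Nat.cast_smul_eq_nsmul ℝ, hnw, sub_self]
    rw [this, inner_zero_left]
  calc ∑ t, ‖v t - c‖ ^ 2
      = ∑ t, (‖v t - w‖ ^ 2 + 2 * inner ℝ (v t - w) (w - c) + ‖w - c‖ ^ 2) := by
        exact Finset.sum_congr rfl fun t _ => key t
    _ = ∑ t, ‖v t - w‖ ^ 2 + 2 * ∑ t, (inner ℝ (v t - w) (w - c) : ℝ)
        + (n : ℝ) * ‖w - c‖ ^ 2 := by
        rw [Finset.sum_add_distrib, Finset.sum_add_distrib, ← Finset.mul_sum,
          Finset.sum_const, Finset.card_univ, Fintype.card_fin, nsmul_eq_mul]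
    _ = ∑ t, ‖v t - w‖ ^ 2 + (n : ℝ) * ‖w - c‖ ^ 2 := by rw [hsum]; ring

lemma pop_identity {α : Type*} [MeasurableSpace α] {μ : Measure α} [IsProbabilityMeasure μ]
    {E : Type*} [NormedAddCommGroup E] [InnerProductSpace ℝ E] [CompleteSpace E]
    {f : α → E} (hf : Integrable f μ) {e : E} (he : e = ∫ x, f x ∂μ)
    (hsq : Integrable (fun x => ‖f x - e‖ ^ 2) μ) (c : E) :
    ∫ x, ‖f x - c‖ ^ 2 ∂μ = ∫ x, ‖f x - e‖ ^ 2 ∂μ + ‖e - c‖ ^ 2 := by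
  have hfe : Integrable (fun x => f x - e) μ := hf.sub (integrable_const e)
  have hmean0 : ∫ x, (f x - e) ∂μ = 0 := by
    rw [integral_sub hf (integrable_const e), integral_const, probReal_univ,
      one_smul, ← he, sub_self]
  have hinner : Integrable (fun x => (inner ℝ (f x - e) (e - c) : ℝ)) μ := by
    have h0 := (innerSL ℝ (e - c)).integrable_comp hfe
    have : (fun x => ((innerSL ℝ (e - c)) (f x - e) : ℝ)) = fun x => (inner ℝ (f x - e) (e - c) : ℝ) := by
      ext x; rw [innerSL_apply_apply]; exact real_inner_comm _ _
    rwa [this] at h0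
  have hint0 : ∫ x, (inner ℝ (f x - e) (e - c) : ℝ) ∂μ = 0 := by
    have h1 : ∫ x, (innerSL ℝ (e - c)) (f x - e) ∂μ = (innerSL ℝ (e - c)) (∫ x, (f x - e) ∂μ) :=
      ContinuousLinearMap.integral_comp_comm _ hfe
    rw [hmean0] at h1
    simp only [map_zero] at h1
    calc ∫ x, (inner ℝ (f x - e) (e - c) : ℝ) ∂μ
        = ∫ x, (innerSL ℝ (e - c)) (f x - e) ∂μ := by
          congr 1; ext x; simp only [innerSL_apply_apply]; exact real_inner_comm _ _
      _ = 0 := h1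
  have key : ∀ x, ‖f x - c‖ ^ 2 =
      ‖f x - e‖ ^ 2 + 2 * inner ℝ (f x - e) (e - c) + ‖e - c‖ ^ 2 := by
    intro x
    have h := norm_add_sq_real (f x - e) (e - c)
    rwa [sub_add_sub_cancel] at h
  calc ∫ x, ‖f x - c‖ ^ 2 ∂μ
      = ∫ x, (‖f x - e‖ ^ 2 + 2 * inner ℝ (f x - e) (e - c) + ‖e - c‖ ^ 2) ∂μ := by
        congr 1; ext x; exact key x
    _ = ∫ x, ‖f x - e‖ ^ 2 ∂μ + 2 * ∫ x, (inner ℝ (f x - e) (e - c) : ℝ) ∂μ + ‖e - c‖ ^ 2 := by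
        have hA : Integrable (fun x => ‖f x - e‖ ^ 2 + 2 * (inner ℝ (f x - e) (e - c) : ℝ)) μ :=
          hsq.add (hinner.const_mul 2)
        have hB : Integrable (fun x => 2 * (inner ℝ (f x - e) (e - c) : ℝ)) μ :=
          hinner.const_mul 2
        rw [integral_add hA (integrable_const _), integral_add hsq hB, integral_const,
          probReal_univ, one_smul, integral_const_mul]
    _ = ∫ x, ‖f x - e‖ ^ 2 ∂μ + ‖e - c‖ ^ 2 := by rw [hint0]; ring

lemma avg_dev_sq {Ω : Type*} [MeasurableSpace Ω] (P : Measure Ω) [IsProbabilityMeasure P]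
    {n : ℕ} (hn : (n : ℝ) ≠ 0) (Y : Fin n → Ω → ℝ) (hY2 : ∀ t, MemLp (Y t) 2 P)
    (hpair : Set.Pairwise ↑(Finset.univ : Finset (Fin n)) fun i j => IndepFun (Y i) (Y j) P)
    (c V : ℝ) (hc : ∀ t, ∫ ω, Y t ω ∂P = c) (hV : ∀ t, ∫ ω, (Y t ω - c) ^ 2 ∂P = V) :
    ∫ ω, ((n : ℝ)⁻¹ * ∑ t, Y t ω - c) ^ 2 ∂P = V / n := by
  have hSmem : MemLp (∑ t, Y t) 2 P := memLp_finset_sum' _ fun t _ => hY2 t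
  have hSint : ∫ ω, (∑ t, Y t) ω ∂P = (n : ℝ) * c := by
    simp only [Finset.sum_apply]
    rw [integral_finset_sum _ fun t _ => (hY2 t).integrable one_le_two]
    simp [hc, Finset.sum_const, mul_comm]
  have hvar_t : ∀ t, variance (Y t) P = V := by
    intro t
    rw [variance_eq_integral (hY2 t).aemeasurable, hc t]
    simpa using hV t
  have hvarS : variance (∑ t, Y t) P = (n : ℝ) * V := by
    rw [IndepFun.variance_sum (fun t _ => hY2 t) hpair]
    simp [hvar_t, Finset.sum_const, mul_comm]
  have hvar_eq : ∫ ω, ((∑ t, Y t) ω - (n : ℝ) * c) ^ 2 ∂P = (n : ℝ) * V := by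
    rw [← hvarS, variance_eq_integral hSmem.aemeasurable, hSint]
  have hpt : ∀ s : ℝ, ((n : ℝ)⁻¹ * s - c) ^ 2 = ((n : ℝ)⁻¹) ^ 2 * (s - (n : ℝ) * c) ^ 2 := by
    intro s; field_simp
  calc ∫ ω, ((n : ℝ)⁻¹ * ∑ t, Y t ω - c) ^ 2 ∂P
      = ∫ ω, ((n : ℝ)⁻¹) ^ 2 * ((∑ t, Y t) ω - (n : ℝ) * c) ^ 2 ∂P := by
        congr 1; ext ω; rw [← hpt]; simp [Finset.sum_apply]
    _ = ((n : ℝ)⁻¹) ^ 2 * ∫ ω, ((∑ t, Y t) ω - (n : ℝ) * c) ^ 2 ∂P := integral_const_mul _ _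
    _ = ((n : ℝ)⁻¹) ^ 2 * ((n : ℝ) * V) := by rw [hvar_eq]
    _ = V / n := by field_simp

lemma euclid_sum_apply {M : ℕ} {ι : Type*} (s : Finset ι) (v : ι → EuclideanSpace ℝ (Fin M))
    (i : Fin M) : (∑ t ∈ s, v t) i = ∑ t ∈ s, v t i := by
  classical
  induction s using Finset.induction_on with
  | empty => rfl
  | insert h ih => simp [Finset.sum_insert, *]

lemma sum_le_sqrt_two_mul (a b s : ℝ) (ha : 0 ≤ a) (hb : 0 ≤ b) (hs : a ^ 2 + b ^ 2 ≤ s) :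
    a + b ≤ Real.sqrt (2 * s) := by
  have h1 : (a + b) ^ 2 ≤ 2 * s := by nlinarith [sq_nonneg (a - b)]
  calc a + b = Real.sqrt ((a + b) ^ 2) := (Real.sqrt_sq (by positivity)).symm
    _ ≤ Real.sqrt (2 * s) := Real.sqrt_le_sqrt h1
set_option maxHeartbeats 1000000 in
/-- Part 1 of the proof of the paper's Proposition 1:
`P(|d'(e,ȳ) − d'(ζ(m),ζ(μ̂))| ≤ m'·√(2·(v₂ + δ))) ≥ 1 − v₂/δ`. -/
theorem embedded_statistic_concentration
    {X : Type*} [MetricSpace X] [MeasurableSpace X] [BorelSpace X]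
    {Ω : Type*} [MeasurableSpace Ω] (P : Measure Ω) [IsProbabilityMeasure P]
    {M : ℕ} (r : Fin M → X)
    -- d' is a metric on ℝ^M dominated by a multiple of the Euclidean distance
    (d' : EuclideanSpace ℝ (Fin M) → EuclideanSpace ℝ (Fin M) → ℝ)
    (hd'_self : ∀ a, d' a a = 0)
    (hd'_eq : ∀ a b, d' a b = 0 → a = b)
    (hd'_symm : ∀ a b, d' a b = d' b a)
    (hd'_tri : ∀ a b c, d' a c ≤ d' a b + d' b c)
    (m' : ℝ) (hm' : 0 < m')
    (hd'_dom : ∀ a b, d' a b ≤ m' * ‖a - b‖)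
    -- i.i.d. sample g_1,…,g_n with common law Q
    {n : ℕ} (hn : 2 ≤ n) (g : Fin n → Ω → X) (hgm : ∀ t, Measurable (g t))
    (Q : Measure X) [IsProbabilityMeasure Q]
    (hlaw : ∀ t, Measure.map (g t) P = Q)
    (hindep : iIndepFun g P)
    (hint : ∀ z : X, Integrable (fun x => dist x z ^ 2) Q)
    -- Fréchet population mean m with variation V_Q
    (m : X) (hmean : ∀ z : X, ∫ x, dist x m ^ 2 ∂Q ≤ ∫ x, dist x z ^ 2 ∂Q)
    (VQ : ℝ) (hVQ : VQ = ∫ x, dist x m ^ 2 ∂Q)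
    -- measurable Fréchet sample mean
    (μhat : Ω → X) (hμhat : Measurable μhat)
    (hsample : ∀ ω, ∀ z : X,
      ∑ t, dist (g t ω) (μhat ω) ^ 2 ≤ ∑ t, dist (g t ω) z ^ 2)
    -- embedded sample mean, expectation, variance and v₂
    (ybar : Ω → EuclideanSpace ℝ (Fin M))
    (hybar : ∀ ω, ybar ω = (n : ℝ)⁻¹ • ∑ t, dissEmbed r (g t ω))
    (e : EuclideanSpace ℝ (Fin M)) (he : e = ∫ x, dissEmbed r x ∂Q)
    (VarF : ℝ) (hVarF : VarF = ∫ x, ‖dissEmbed r x - e‖ ^ 2 ∂Q)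
    (v2 : ℝ) (hv2 : v2 = (M : ℝ) * VQ - VarF / 2) :
    ∀ δ > (0 : ℝ),
      (1 : ℝ) - v2 / δ ≤
        (P {ω | |d' e (ybar ω) - d' (dissEmbed r m) (dissEmbed r (μhat ω))| ≤
            m' * Real.sqrt (2 * (v2 + δ))}).toReal := by
  intro δ hδ
  have hn0 : (0:ℕ) < n := by omega
  have hnR : (n : ℝ) ≠ 0 := Nat.cast_ne_zero.2 (by omega)
  have hnpos : (0:ℝ) < n := by exact_mod_cast hn0
  have hn2 : (2:ℝ) ≤ n := by exact_mod_cast hn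
  set ζ : X → EuclideanSpace ℝ (Fin M) := dissEmbed r with hζ
  have hζc : Continuous ζ := dissEmbed_continuous r
  have hζm : Measurable ζ := hζc.measurable
  -- measurability / L² facts over Q
  have hfim : ∀ i, Measurable (fun x => dist x (r i)) :=
    fun i => (continuous_id.dist continuous_const).measurable
  have hfi2 : ∀ i, MemLp (fun x => dist x (r i)) 2 Q := by
    intro i
    refine (memLp_two_iff_integrable_sq (hfim i).aestronglyMeasurable).2 ?_
    have := hint (r i)
    simpa [pow_two] using this
  have hζaesm : AEStronglyMeasurable ζ Q := hζc.aestronglyMeasurable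
  have hζnormsq : Integrable (fun x => ‖ζ x‖ ^ 2) Q := by
    have : (fun x => ‖ζ x‖ ^ 2) = fun x => ∑ i, dist x (r i) ^ 2 := by
      ext x; rw [euclid_norm_sq]; rfl
    rw [this]
    exact integrable_finset_sum _ fun i _ => hint (r i)
  have hζmem : MemLp ζ 2 Q := (memLp_two_iff_integrable_sq_norm hζaesm).2 hζnormsq
  have hζint : Integrable ζ Q := hζmem.integrable one_le_two
  have hsqc : ∀ c, Integrable (fun x => ‖ζ x - c‖ ^ 2) Q := by
    intro c
    have h1 : MemLp (fun x => ζ x - c) 2 Q := hζmem.sub (memLp_const c)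
    exact (memLp_two_iff_integrable_sq_norm (hζaesm.sub aestronglyMeasurable_const)).1 h1
  -- population bias-variance
  have hpop : ∀ c, ∫ x, ‖ζ x - c‖ ^ 2 ∂Q = VarF + ‖e - c‖ ^ 2 := by
    intro c
    rw [hVarF]
    exact pop_identity hζint he (hsqc e) c
  have hVarF0 : 0 ≤ VarF := hVarF ▸ integral_nonneg fun x => sq_nonneg _
  -- deterministic bound on ‖e - ζ m‖²
  have h2 : ‖e - ζ m‖ ^ 2 ≤ (M : ℝ) * VQ - VarF := by
    have hle : ∫ x, ‖ζ x - ζ m‖ ^ 2 ∂Q ≤ (M : ℝ) * VQ := by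
      calc ∫ x, ‖ζ x - ζ m‖ ^ 2 ∂Q ≤ ∫ x, (M : ℝ) * dist x m ^ 2 ∂Q :=
            integral_mono (hsqc (ζ m)) ((hint m).const_mul _)
              (fun x => dissEmbed_sub_norm_sq_le r x m)
        _ = (M : ℝ) * VQ := by rw [integral_const_mul, ← hVQ]
    have := hpop (ζ m)
    linarith
  -- coordinates of e
  have hei : ∀ i, e i = ∫ x, dist x (r i) ∂Q := by
    intro i
    have h1 : ∫ x, (EuclideanSpace.proj i : EuclideanSpace ℝ (Fin M) →L[ℝ] ℝ) (ζ x) ∂Q =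
        (EuclideanSpace.proj i) (∫ x, ζ x ∂Q) :=
      ContinuousLinearMap.integral_comp_comm _ hζint
    have h2 : (EuclideanSpace.proj i) (∫ x, ζ x ∂Q) = (∫ x, ζ x ∂Q) i := by simp
    have h3 : (fun x => (EuclideanSpace.proj i : EuclideanSpace ℝ (Fin M) →L[ℝ] ℝ) (ζ x)) =
        fun x => dist x (r i) := by
      ext x
      simp only [PiLp.proj_apply]
      rfl
    calc e i = (∫ x, ζ x ∂Q) i := by rw [he]
      _ = (EuclideanSpace.proj i) (∫ x, ζ x ∂Q) := h2.symm
      _ = ∫ x, (EuclideanSpace.proj i) (ζ x) ∂Q := h1.symm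
      _ = ∫ x, dist x (r i) ∂Q := by rw [h3]
  -- VarF as a sum of coordinate variances
  set Vi : Fin M → ℝ := fun i => ∫ x, (dist x (r i) - e i) ^ 2 ∂Q with hVi
  have hVi_int : ∀ i, Integrable (fun x => (dist x (r i) - e i) ^ 2) Q := by
    intro i
    have h1 : MemLp (fun x => dist x (r i) - e i) 2 Q := (hfi2 i).sub (memLp_const _)
    have := h1.integrable_sq
    simpa [pow_two] using this
  have hVarFsum : VarF = ∑ i, Vi i := by
    rw [hVarF]
    have : (fun x => ‖ζ x - e‖ ^ 2) = fun x => ∑ i, (dist x (r i) - e i) ^ 2 := by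
      ext x; rw [euclid_norm_sq]; rfl
    rw [this, integral_finset_sum _ fun i _ => hVi_int i]
  -- pull-back helpers
  have hpull_eq : ∀ (t : Fin n) (F : X → ℝ), AEStronglyMeasurable F Q →
      ∫ ω, F (g t ω) ∂P = ∫ x, F x ∂Q := by
    intro t F hF
    rw [← hlaw t] at hF ⊢
    exact (integral_map (hgm t).aemeasurable hF).symm
  have hpull_int : ∀ (t : Fin n) (F : X → ℝ), AEStronglyMeasurable F Q → Integrable F Q →
      Integrable (fun ω => F (g t ω)) P := by
    intro t F hF hFi
    rw [← hlaw t] at hF hFi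
    exact (integrable_map_measure hF (hgm t).aemeasurable).1 hFi
  -- MemLp of coordinates over Ω
  have hYmem : ∀ (t : Fin n) (i : Fin M), MemLp (fun ω => dist (g t ω) (r i)) 2 P := by
    intro t i
    have h1 : MemLp (fun x => dist x (r i)) 2 (Measure.map (g t) P) := by rw [hlaw t]; exact hfi2 i
    exact (memLp_map_measure_iff (hfim i).aestronglyMeasurable (hgm t).aemeasurable).1 h1
  -- ∫ ‖ybar - e‖² = VarF / n ≤ VarF / 2
  have hybar_coord : ∀ ω (i : Fin M), ybar ω i = (n : ℝ)⁻¹ * ∑ t, dist (g t ω) (r i) := by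
    intro ω i
    rw [hybar ω]
    show (n : ℝ)⁻¹ * (∑ t, ζ (g t ω)) i = _
    rw [euclid_sum_apply]
    rfl
  have hH_coord_int : ∀ i : Fin M,
      Integrable (fun ω => ((n : ℝ)⁻¹ * ∑ t, dist (g t ω) (r i) - e i) ^ 2) P := by
    intro i
    have h1 : MemLp (fun ω => (n : ℝ)⁻¹ * ∑ t, dist (g t ω) (r i) - e i) 2 P := by
      have hs : MemLp (fun ω => ∑ t, dist (g t ω) (r i)) 2 P := by
        have h0 := memLp_finset_sum' (μ := P) (Finset.univ)
          (f := fun t (ω : Ω) => dist (g t ω) (r i)) (fun t _ => hYmem t i)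
        have hfun : (∑ t : Fin n, fun (ω : Ω) => dist (g t ω) (r i)) =
            fun ω => ∑ t, dist (g t ω) (r i) := by
          ext ω; simp
        rwa [hfun] at h0
      exact (hs.const_mul _).sub (memLp_const _)
    have := h1.integrable_sq
    simpa [pow_two] using this
  have hH_eq : ∫ ω, ‖ybar ω - e‖ ^ 2 ∂P = VarF / n := by
    have hco : ∀ i : Fin M,
        ∫ ω, ((n : ℝ)⁻¹ * ∑ t, dist (g t ω) (r i) - e i) ^ 2 ∂P = Vi i / n := by
      intro i
      refine avg_dev_sq P hnR (fun t ω => dist (g t ω) (r i)) (fun t => hYmem t i) ?_ (e i)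
        (Vi i) ?_ ?_
      · intro a _ b _ hab
        exact (hindep.indepFun hab).comp (hfim i) (hfim i)
      · intro t
        rw [hpull_eq t _ (hfim i).aestronglyMeasurable, hei i]
      · intro t
        rw [hpull_eq t (fun x => (dist x (r i) - e i) ^ 2) (((hfim i).sub measurable_const).pow_const 2).aestronglyMeasurable]
    have hfun : (fun ω => ‖ybar ω - e‖ ^ 2) =
        fun ω => ∑ i, ((n : ℝ)⁻¹ * ∑ t, dist (g t ω) (r i) - e i) ^ 2 := by
      ext ω
      rw [euclid_norm_sq]
      exact Finset.sum_congr rfl fun i _ => by rw [show (ybar ω - e) i = ybar ω i - e i from rfl,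
        hybar_coord ω i]
    rw [hfun, integral_finset_sum _ fun i _ => hH_coord_int i]
    rw [Finset.sum_congr rfl fun i _ => hco i, ← Finset.sum_div, ← hVarFsum]
  -- sample identity specialized
  have hsid : ∀ ω c, ∑ t, ‖ζ (g t ω) - c‖ ^ 2 =
      ∑ t, ‖ζ (g t ω) - ybar ω‖ ^ 2 + (n : ℝ) * ‖ybar ω - c‖ ^ 2 := by
    intro ω c
    have h1 := sample_identity hnR (fun t => ζ (g t ω)) c
    rw [← hybar ω] at h1
    exact h1
  -- the statistic W
  set W : Ω → ℝ := fun ω => (M : ℝ) * ((n : ℝ)⁻¹ * ∑ t, dist (g t ω) m ^ 2) -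
      (n : ℝ)⁻¹ * ∑ t, ‖ζ (g t ω) - ybar ω‖ ^ 2 with hW
  have hZm_le : ∀ ω (z : X), ∑ t, ‖ζ (g t ω) - ζ z‖ ^ 2 ≤ (M : ℝ) * ∑ t, dist (g t ω) z ^ 2 := by
    intro ω z
    calc ∑ t, ‖ζ (g t ω) - ζ z‖ ^ 2 ≤ ∑ t, (M : ℝ) * dist (g t ω) z ^ 2 :=
          Finset.sum_le_sum fun t _ => dissEmbed_sub_norm_sq_le r (g t ω) z
      _ = (M : ℝ) * ∑ t, dist (g t ω) z ^ 2 := by rw [Finset.mul_sum]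
  have h_yb_dev : ∀ ω, ‖ybar ω - ζ (μhat ω)‖ ^ 2 ≤ W ω := by
    intro ω
    have h1 := hsid ω (ζ (μhat ω))
    have h2 : ∑ t, ‖ζ (g t ω) - ζ (μhat ω)‖ ^ 2 ≤ (M : ℝ) * ∑ t, dist (g t ω) m ^ 2 := by
      calc ∑ t, ‖ζ (g t ω) - ζ (μhat ω)‖ ^ 2 ≤ (M : ℝ) * ∑ t, dist (g t ω) (μhat ω) ^ 2 :=
            hZm_le ω (μhat ω)
        _ ≤ (M : ℝ) * ∑ t, dist (g t ω) m ^ 2 :=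
            mul_le_mul_of_nonneg_left (hsample ω m) (Nat.cast_nonneg M)
    have hinv : (0:ℝ) < (n : ℝ)⁻¹ := by positivity
    rw [hW]
    have h3 : ‖ybar ω - ζ (μhat ω)‖ ^ 2 =
        (n : ℝ)⁻¹ * (∑ t, ‖ζ (g t ω) - ζ (μhat ω)‖ ^ 2 - ∑ t, ‖ζ (g t ω) - ybar ω‖ ^ 2) := by
      field_simp
      linarith [h1]
    rw [h3]
    have h4 : ∑ t, ‖ζ (g t ω) - ζ (μhat ω)‖ ^ 2 - ∑ t, ‖ζ (g t ω) - ybar ω‖ ^ 2 ≤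
        (M : ℝ) * ∑ t, dist (g t ω) m ^ 2 - ∑ t, ‖ζ (g t ω) - ybar ω‖ ^ 2 := by linarith
    calc (n : ℝ)⁻¹ * (∑ t, ‖ζ (g t ω) - ζ (μhat ω)‖ ^ 2 - ∑ t, ‖ζ (g t ω) - ybar ω‖ ^ 2)
        ≤ (n : ℝ)⁻¹ * ((M : ℝ) * ∑ t, dist (g t ω) m ^ 2 - ∑ t, ‖ζ (g t ω) - ybar ω‖ ^ 2) :=
          mul_le_mul_of_nonneg_left h4 hinv.le
      _ = (M : ℝ) * ((n : ℝ)⁻¹ * ∑ t, dist (g t ω) m ^ 2) -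
          (n : ℝ)⁻¹ * ∑ t, ‖ζ (g t ω) - ybar ω‖ ^ 2 := by ring
  have h_W_nonneg : ∀ ω, 0 ≤ W ω := by
    intro ω
    have h1 := hsid ω (ζ m)
    have h2 := hZm_le ω m
    have h5 : (0:ℝ) ≤ (n : ℝ) * ‖ybar ω - ζ m‖ ^ 2 := by positivity
    have h3 : ∑ t, ‖ζ (g t ω) - ybar ω‖ ^ 2 ≤ (M : ℝ) * ∑ t, dist (g t ω) m ^ 2 := by linarith
    have hinv : (0:ℝ) < (n : ℝ)⁻¹ := by positivity
    rw [hW]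
    have := mul_le_mul_of_nonneg_left h3 hinv.le
    simp only [ge_iff_le, sub_nonneg]
    calc (n : ℝ)⁻¹ * ∑ t, ‖ζ (g t ω) - ybar ω‖ ^ 2
        ≤ (n : ℝ)⁻¹ * ((M : ℝ) * ∑ t, dist (g t ω) m ^ 2) := this
      _ = (M : ℝ) * ((n : ℝ)⁻¹ * ∑ t, dist (g t ω) m ^ 2) := by ring
  -- measurability
  have hybar_meas : Measurable ybar := by
    have : ybar = fun ω => (n : ℝ)⁻¹ • ∑ t, ζ (g t ω) := funext hybar
    rw [this]
    exact Measurable.const_smul (Finset.measurable_sum _ fun t _ => hζm.comp (hgm t)) ((n : ℝ)⁻¹)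
  have hZt_meas : ∀ t : Fin n, Measurable fun ω => ζ (g t ω) := fun t => hζm.comp (hgm t)
  have hB_meas : Measurable fun ω => (n : ℝ)⁻¹ * ∑ t, ‖ζ (g t ω) - ybar ω‖ ^ 2 := by
    refine Measurable.const_mul (Finset.measurable_sum _ fun t _ => ?_) _
    exact (((hZt_meas t).sub hybar_meas).norm).pow_const 2
  have hW_meas : Measurable W := by
    rw [hW]
    exact (((Finset.measurable_sum _ fun t _ =>
      ((continuous_id.dist continuous_const).measurable.comp (hgm t)).pow_const 2).const_mul _).const_mul _).sub hB_meas
  -- integrability and expectation of W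
  have hdistm : Measurable (fun x : X => dist x m) := (continuous_id.dist continuous_const).measurable
  have hdistm2 : AEStronglyMeasurable (fun x : X => dist x m ^ 2) Q :=
    (hdistm.pow_const 2).aestronglyMeasurable
  have hDt_int : ∀ t : Fin n, Integrable (fun ω => dist (g t ω) m ^ 2) P := fun t =>
    hpull_int t (fun x => dist x m ^ 2) hdistm2 (hint m)
  have hDt_eq : ∀ t : Fin n, ∫ ω, dist (g t ω) m ^ 2 ∂P = VQ := fun t => by
    rw [hpull_eq t (fun x => dist x m ^ 2) hdistm2, ← hVQ]
  have hZe_int : ∀ t : Fin n, Integrable (fun ω => ‖ζ (g t ω) - e‖ ^ 2) P := fun t =>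
    hpull_int t _ (((hζm.sub measurable_const).norm.pow_const 2).aestronglyMeasurable) (hsqc e)
  have hZe_eq : ∀ t : Fin n, ∫ ω, ‖ζ (g t ω) - e‖ ^ 2 ∂P = VarF := fun t => by
    rw [hpull_eq t (fun x => ‖ζ x - e‖ ^ 2) (((hζm.sub measurable_const).norm.pow_const 2).aestronglyMeasurable),
      ← hVarF]
  set G : Ω → ℝ := fun ω => (n : ℝ)⁻¹ * ∑ t, ‖ζ (g t ω) - e‖ ^ 2 with hG
  set H : Ω → ℝ := fun ω => ‖ybar ω - e‖ ^ 2 with hHdef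
  have hG_int : Integrable G P := by
    rw [hG]
    exact (integrable_finset_sum _ fun t _ => hZe_int t).const_mul _
  have hG_eq : ∫ ω, G ω ∂P = VarF := by
    rw [hG]
    simp only [integral_const_mul]
    rw [integral_finset_sum _ fun t _ => hZe_int t]
    rw [Finset.sum_congr rfl fun t _ => hZe_eq t]
    simp [Finset.sum_const, Finset.card_univ]
    field_simp
  have hB_eq_GH : ∀ ω, (n : ℝ)⁻¹ * ∑ t, ‖ζ (g t ω) - ybar ω‖ ^ 2 = G ω - H ω := by
    intro ω
    have h1 := hsid ω e
    rw [hG, hHdef]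
    field_simp
    linarith [h1]
  have hH_le_G : ∀ ω, H ω ≤ G ω := by
    intro ω
    have h1 := hB_eq_GH ω
    have h2 : 0 ≤ (n : ℝ)⁻¹ * ∑ t, ‖ζ (g t ω) - ybar ω‖ ^ 2 := by positivity
    linarith
  have hH_meas : Measurable H := (hybar_meas.sub measurable_const).norm.pow_const 2
  have hH_int : Integrable H P := by
    refine hG_int.mono' hH_meas.aestronglyMeasurable ?_
    filter_upwards with ω
    rw [Real.norm_eq_abs, abs_of_nonneg (by positivity)]
    exact hH_le_G ω
  have hH_val : ∫ ω, H ω ∂P = VarF / n := hH_eq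
  have hW_int : Integrable W P := by
    have h1 : W = fun ω => ((M : ℝ) * ((n : ℝ)⁻¹ * ∑ t, dist (g t ω) m ^ 2)) - (G ω - H ω) := by
      funext ω
      simp only [hW]
      rw [hB_eq_GH ω]
    rw [h1]
    exact (((integrable_finset_sum _ fun t _ => hDt_int t).const_mul _).const_mul _).sub
      (hG_int.sub hH_int)
  have hEW : ∫ ω, W ω ∂P ≤ v2 := by
    have h1 : W = fun ω => ((M : ℝ) * ((n : ℝ)⁻¹ * ∑ t, dist (g t ω) m ^ 2)) - (G ω - H ω) := by
      funext ω
      simp only [hW]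
      rw [hB_eq_GH ω]
    have hA_int : Integrable (fun ω => (M : ℝ) * ((n : ℝ)⁻¹ * ∑ t, dist (g t ω) m ^ 2)) P :=
      ((integrable_finset_sum _ fun t _ => hDt_int t).const_mul _).const_mul _
    have hA_eq : ∫ ω, (M : ℝ) * ((n : ℝ)⁻¹ * ∑ t, dist (g t ω) m ^ 2) ∂P = (M : ℝ) * VQ := by
      simp only [integral_const_mul]
      rw [integral_finset_sum _ fun t _ => hDt_int t,
        Finset.sum_congr rfl fun t _ => hDt_eq t, Finset.sum_const, Finset.card_univ,
        Fintype.card_fin, nsmul_eq_mul, inv_mul_cancel_left₀ hnR]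
    have hWval : ∫ ω, W ω ∂P = (M : ℝ) * VQ - (VarF - VarF / n) := by
      calc ∫ ω, W ω ∂P
          = ∫ ω, ((M : ℝ) * ((n : ℝ)⁻¹ * ∑ t, dist (g t ω) m ^ 2) - (G ω - H ω)) ∂P := by
            rw [h1]
        _ = (∫ ω, (M : ℝ) * ((n : ℝ)⁻¹ * ∑ t, dist (g t ω) m ^ 2) ∂P) -
            ∫ ω, (G ω - H ω) ∂P := integral_sub hA_int (hG_int.sub hH_int)
        _ = (M : ℝ) * VQ - (VarF - VarF / n) := by
            rw [hA_eq, integral_sub hG_int hH_int, hG_eq, hH_val]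
    rw [hWval, hv2]
    have hhalf : VarF / n ≤ VarF / 2 := by
      rw [div_le_div_iff₀ hnpos two_pos]
      nlinarith [hVarF0, hn2]
    linarith
  have hEW0 : 0 ≤ ∫ ω, W ω ∂P := integral_nonneg h_W_nonneg
  have hv20 : 0 ≤ v2 := le_trans hEW0 hEW
  -- Markov inequality
  set c : ℝ := VarF / 2 + δ with hc
  have hcpos : 0 < c := by rw [hc]; linarith
  have hδc : δ ≤ c := by rw [hc]; linarith
  have hMarkov : (P {ω | c ≤ W ω}).toReal ≤ v2 / δ := by
    have h1 : c * (P {ω | c ≤ W ω}).toReal ≤ ∫ ω, W ω ∂P :=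
      mul_meas_ge_le_integral_of_nonneg (Filter.Eventually.of_forall h_W_nonneg) hW_int c
    have h2 : (P {ω | c ≤ W ω}).toReal ≤ v2 / c := by
      rw [le_div_iff₀ hcpos]
      calc (P {ω | c ≤ W ω}).toReal * c = c * (P {ω | c ≤ W ω}).toReal := mul_comm _ _
        _ ≤ ∫ ω, W ω ∂P := h1
        _ ≤ v2 := hEW
    calc (P {ω | c ≤ W ω}).toReal ≤ v2 / c := h2
      _ ≤ v2 / δ := by
          rw [div_le_div_iff₀ hcpos hδ]
          nlinarith [hv20, hδc, hδ]
  -- the good event is contained in the target event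
  have hsubset : {ω | W ω < c} ⊆
      {ω | |d' e (ybar ω) - d' (dissEmbed r m) (dissEmbed r (μhat ω))| ≤
        m' * Real.sqrt (2 * (v2 + δ))} := by
    intro ω hω
    simp only [Set.mem_setOf_eq] at hω ⊢
    set a := ‖e - ζ m‖ with ha
    set b := ‖ybar ω - ζ (μhat ω)‖ with hb
    have hquad : |d' e (ybar ω) - d' (ζ m) (ζ (μhat ω))| ≤
        d' e (ζ m) + d' (ybar ω) (ζ (μhat ω)) := by
      rw [abs_sub_le_iff]
      constructor
      · have t1 := hd'_tri e (ζ m) (ybar ω)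
        have t2 := hd'_tri (ζ m) (ζ (μhat ω)) (ybar ω)
        have t3 := hd'_symm (ζ (μhat ω)) (ybar ω)
        linarith
      · have t1 := hd'_tri (ζ m) e (ζ (μhat ω))
        have t2 := hd'_tri e (ybar ω) (ζ (μhat ω))
        have t3 := hd'_symm (ζ m) e
        have t4 := hd'_symm (ybar ω) (ζ (μhat ω))
        linarith
    have hdom1 : d' e (ζ m) ≤ m' * a := hd'_dom e (ζ m)
    have hdom2 : d' (ybar ω) (ζ (μhat ω)) ≤ m' * b := hd'_dom (ybar ω) (ζ (μhat ω))
    have hab : a + b ≤ Real.sqrt (2 * (v2 + δ)) := by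
      apply sum_le_sqrt_two_mul a b _ (norm_nonneg _) (norm_nonneg _)
      have hb2 : b ^ 2 ≤ W ω := h_yb_dev ω
      have hWc : W ω < VarF / 2 + δ := hω
      rw [hv2]
      clear_value a b W
      linarith [h2, hb2, hWc]
    calc |d' e (ybar ω) - d' (ζ m) (ζ (μhat ω))|
        ≤ d' e (ζ m) + d' (ybar ω) (ζ (μhat ω)) := hquad
      _ ≤ m' * a + m' * b := add_le_add hdom1 hdom2
      _ = m' * (a + b) := by ring
      _ ≤ m' * Real.sqrt (2 * (v2 + δ)) := mul_le_mul_of_nonneg_left hab hm'.le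
  -- wrap up with measures
  have hmeasW : MeasurableSet {ω | c ≤ W ω} := measurableSet_le measurable_const hW_meas
  have hcompl : {ω | W ω < c} = {ω | c ≤ W ω}ᶜ := by
    ext ω; simp [not_le]
  have hPgood : (1 : ℝ) - v2 / δ ≤ (P {ω | W ω < c}).toReal := by
    rw [hcompl, measure_compl hmeasW (measure_ne_top P _), measure_univ,
      ENNReal.toReal_sub_of_le (prob_le_one) ENNReal.one_ne_top, ENNReal.toReal_one]
    linarith [hMarkov]
  calc (1 : ℝ) - v2 / δ ≤ (P {ω | W ω < c}).toReal := hPgood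
    _ ≤ (P {ω | |d' e (ybar ω) - d' (dissEmbed r m) (dissEmbed r (μhat ω))| ≤
          m' * Real.sqrt (2 * (v2 + δ))}).toReal := by
        exact (ENNReal.toReal_le_toReal (measure_ne_top P _) (measure_ne_top P _)).mpr
          (measure_mono hsubset)
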